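/- Let (C_1, …, C_ℓ) be a finite indexed family of nonempty subsets of V with ℓ ≥ 1, let k = max{|H| : H is a hyperedge}, and let J = {H_1, …, H_r} be a greedy matching (pairwise disjoint hyperedges, each H_t of maximum score among hyperedges disjoint from H_1, …, H_{t−1}, and no hyperedge disjoint from all of them). For each H ∈ J fix a center c_H ∈ ⋂_{i∈H} C_i and let D_J = ⋃_{H∈J} {(c_H→x) : x ∈ ⋃_{i∈H} C_i, x ≠ c_H}. Let D* be an arc set on V of minimum cardinality satisfying the directed-star property for every community C_i. Then |D_J| ≤ ((k−1)/k)·C_tot + (1/k)·|D*|. -/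

import Mathlib

open scoped Classical

/-- An arc set `A` satisfies the directed-star property for `S` if some `c ∈ S`
has an arc `(c→x) ∈ A` to every other element of `S`. -/
def DiStarProp {V : Type*} (A : Finset (V × V)) (S : Finset V) : Prop :=
  ∃ c ∈ S, ∀ x ∈ S, x ≠ c → (c, x) ∈ A

/-- The intersection `⋂_{i∈H} C_i` of the communities indexed by `H`. -/
noncomputable def interC {V : Type*} [Fintype V] {ℓ : ℕ} (C : Fin ℓ → Finset V)
    (H : Finset (Fin ℓ)) : Finset V :=
  Finset.univ.filter (fun v => ∀ i ∈ H, v ∈ C i)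

/-- The union `⋃_{i∈H} C_i` of the communities indexed by `H`. -/
def unionC {V : Type*} [DecidableEq V] {ℓ : ℕ} (C : Fin ℓ → Finset V)
    (H : Finset (Fin ℓ)) : Finset V :=
  H.biUnion C

/-- A hyperedge is a nonempty set of indices whose communities have nonempty
common intersection. -/
def IsHyperedge {V : Type*} [Fintype V] {ℓ : ℕ} (C : Fin ℓ → Finset V)
    (H : Finset (Fin ℓ)) : Prop :=
  H.Nonempty ∧ (interC C H).Nonempty

/-- The score `c(H) = 1 − |H| + Σ_{v ∈ ⋃_{i∈H} C_i} (|{i ∈ H : v ∈ C_i}| − 1)`. -/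
noncomputable def score {V : Type*} [Fintype V] [DecidableEq V] {ℓ : ℕ}
    (C : Fin ℓ → Finset V) (H : Finset (Fin ℓ)) : ℤ :=
  1 - (H.card : ℤ) +
    ∑ v ∈ unionC C H, (((H.filter (fun i => v ∈ C i)).card : ℤ) - 1)

/-- A matching is a set of pairwise disjoint hyperedges. -/
def IsHyperMatching {V : Type*} [Fintype V] {ℓ : ℕ} (C : Fin ℓ → Finset V)
    (I : Finset (Finset (Fin ℓ))) : Prop :=
  (∀ H ∈ I, IsHyperedge C H) ∧ ∀ H ∈ I, ∀ H' ∈ I, H ≠ H' → Disjoint H H'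

lemma sum_deg_eq {V : Type*} [Fintype V] [DecidableEq V] {ℓ : ℕ}
    (C : Fin ℓ → Finset V) (H : Finset (Fin ℓ)) :
    ∑ v ∈ unionC C H, ((H.filter (fun i => v ∈ C i)).card : ℤ)
      = ∑ i ∈ H, ((C i).card : ℤ) := by
  have step1 : ∀ v, ((H.filter (fun i => v ∈ C i)).card : ℤ)
      = ∑ i ∈ H, (if v ∈ C i then (1:ℤ) else 0) := by
    intro v
    rw [Finset.card_filter]
    push_cast
    rfl
  simp_rw [step1]
  rw [Finset.sum_comm]
  refine Finset.sum_congr rfl fun i hi => ?_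
  rw [Finset.sum_boole]
  have : (unionC C H).filter (fun v => v ∈ C i) = C i := by
    ext v
    simp only [Finset.mem_filter, unionC, Finset.mem_biUnion]
    exact ⟨fun h => h.2, fun hv => ⟨⟨i, hi, hv⟩, hv⟩⟩
  simp [this]

lemma score_formula {V : Type*} [Fintype V] [DecidableEq V] {ℓ : ℕ}
    (C : Fin ℓ → Finset V) (H : Finset (Fin ℓ)) :
    score C H = 1 - (H.card : ℤ) + (∑ i ∈ H, ((C i).card : ℤ)) - (unionC C H).card := by
  unfold score
  rw [Finset.sum_sub_distrib, sum_deg_eq]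
  simp [Finset.sum_const]
  ring

lemma union_card_eq {V : Type*} [Fintype V] [DecidableEq V] {ℓ : ℕ}
    (C : Fin ℓ → Finset V) (H : Finset (Fin ℓ)) :
    ((unionC C H).card : ℤ) - 1 = (∑ i ∈ H, (((C i).card : ℤ) - 1)) - score C H := by
  have := score_formula C H
  rw [Finset.sum_sub_distrib] at *
  simp [Finset.sum_const] at *
  linarith

lemma score_nonneg {V : Type*} [Fintype V] [DecidableEq V] {ℓ : ℕ}
    (C : Fin ℓ → Finset V) {H : Finset (Fin ℓ)}
    (hH : IsHyperedge C H) : 0 ≤ score C H := by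
  obtain ⟨hne, v0, hv0⟩ := hH
  have hv0' : ∀ i ∈ H, v0 ∈ C i := by simpa [interC] using hv0
  obtain ⟨i0, hi0⟩ := hne
  have hv0U : v0 ∈ unionC C H := Finset.mem_biUnion.2 ⟨i0, hi0, hv0' i0 hi0⟩
  have hsplit : ∑ v ∈ unionC C H, (((H.filter (fun i => v ∈ C i)).card : ℤ) - 1)
      = (((H.filter (fun i => v0 ∈ C i)).card : ℤ) - 1)
        + ∑ v ∈ (unionC C H).erase v0, (((H.filter (fun i => v ∈ C i)).card : ℤ) - 1) :=
    (Finset.add_sum_erase _ _ hv0U).symm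
  have hfull : H.filter (fun i => v0 ∈ C i) = H :=
    Finset.filter_true_of_mem hv0'
  have hpos : 0 ≤ ∑ v ∈ (unionC C H).erase v0, (((H.filter (fun i => v ∈ C i)).card : ℤ) - 1) := by
    refine Finset.sum_nonneg fun v hv => ?_
    have hvU : v ∈ unionC C H := Finset.mem_of_mem_erase hv
    obtain ⟨i, hi, hvi⟩ := Finset.mem_biUnion.1 hvU
    have h1 : 1 ≤ (H.filter (fun j => v ∈ C j)).card :=
      Finset.card_pos.2 ⟨i, Finset.mem_filter.2 ⟨hi, hvi⟩⟩
    have : (1:ℤ) ≤ ((H.filter (fun j => v ∈ C j)).card : ℤ) := by exact_mod_cast h1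
    linarith
  unfold score
  rw [hsplit, hfull]
  linarith

/-- Corollary: the arc set `D_J` obtained from a greedy matching `J = {H_1, …, H_r}`
(with chosen centers `c_H ∈ ⋂_{i∈H} C_i`) satisfies
`|D_J| ≤ ((k−1)/k)·C_tot + (1/k)·|D*|`, where `D*` is a minimum-cardinality arc set
satisfying the directed-star property for every community and `k` is the maximum
hyperedge size. -/
theorem greedy_distars_bound
    {V : Type*} [Fintype V] [DecidableEq V]
    (ℓ : ℕ) (hℓ : 1 ≤ ℓ) (C : Fin ℓ → Finset V) (hC : ∀ i, (C i).Nonempty)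
    (k : ℕ)
    (hk_ub : ∀ H : Finset (Fin ℓ), IsHyperedge C H → H.card ≤ k)
    (hk_max : ∃ H : Finset (Fin ℓ), IsHyperedge C H ∧ H.card = k)
    (r : ℕ) (Hs : Fin r → Finset (Fin ℓ))
    (hHs : ∀ t, IsHyperedge C (Hs t))
    (hdisj : ∀ s t : Fin r, s ≠ t → Disjoint (Hs s) (Hs t))
    (hgreedy : ∀ t : Fin r, ∀ H : Finset (Fin ℓ), IsHyperedge C H →
      (∀ s : Fin r, s < t → Disjoint H (Hs s)) → score C H ≤ score C (Hs t))
    (hmaximal : ¬ ∃ H : Finset (Fin ℓ), IsHyperedge C H ∧ ∀ t : Fin r, Disjoint H (Hs t))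
    (ctr : Fin r → V) (hctr : ∀ t, ctr t ∈ interC C (Hs t))
    (DJ : Finset (V × V))
    (hDJ : DJ = Finset.univ.biUnion
      (fun t : Fin r => ((unionC C (Hs t)).erase (ctr t)).image (fun x => (ctr t, x))))
    (Dstar : Finset (V × V)) (hDarc : ∀ p ∈ Dstar, p.1 ≠ p.2)
    (hDsat : ∀ i, DiStarProp Dstar (C i))
    (hDmin : ∀ A : Finset (V × V), (∀ p ∈ A, p.1 ≠ p.2) →
      (∀ i, DiStarProp A (C i)) → Dstar.card ≤ A.card) :
    (DJ.card : ℝ) ≤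
      (((k : ℝ) - 1) / k) * (∑ i : Fin ℓ, ((C i).card - 1 : ℝ)) +
        (1 / (k : ℝ)) * Dstar.card := by
  classical
  obtain ⟨H0, hH0, hH0k⟩ := hk_max
  have hk1 : 1 ≤ k := hH0k ▸ Finset.card_pos.2 hH0.1
  set A : ℤ := ∑ i : Fin ℓ, (((C i).card : ℤ) - 1) with hA
  set S : ℤ := ∑ t : Fin r, score C (Hs t) with hS
  -- every hyperedge meets some greedy edge
  push_neg at hmaximal
  have hr : ∀ H : Finset (Fin ℓ), IsHyperedge C H → ∃ t, ¬ Disjoint H (Hs t) := by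
    intro H hH
    obtain ⟨t, ht⟩ := hmaximal H hH
    exact ⟨t, ht⟩
  have hr0 : 0 < r := by
    obtain ⟨t, _⟩ := hr H0 hH0
    exact t.pos
  -- Step 1: |DJ| ≤ Σ_t (|U_t| - 1)
  have hctrU : ∀ t, ctr t ∈ unionC C (Hs t) := by
    intro t
    obtain ⟨i0, hi0⟩ := (hHs t).1
    have := hctr t
    simp only [interC, Finset.mem_filter] at this
    exact Finset.mem_biUnion.2 ⟨i0, hi0, this.2 i0 hi0⟩
  have hUpos : ∀ t, 1 ≤ (unionC C (Hs t)).card :=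
    fun t => Finset.card_pos.2 ⟨ctr t, hctrU t⟩
  have h1 : (DJ.card : ℤ) ≤ ∑ t : Fin r, (((unionC C (Hs t)).card : ℤ) - 1) := by
    have hnat : DJ.card ≤ ∑ t : Fin r, ((unionC C (Hs t)).card - 1) := by
      rw [hDJ]
      refine le_trans Finset.card_biUnion_le (Finset.sum_le_sum fun t _ => ?_)
      refine le_trans Finset.card_image_le ?_
      rw [Finset.card_erase_of_mem (hctrU t)]
    calc (DJ.card : ℤ) ≤ ((∑ t : Fin r, ((unionC C (Hs t)).card - 1) : ℕ) : ℤ) := by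
          exact_mod_cast hnat
      _ = ∑ t : Fin r, (((unionC C (Hs t)).card : ℤ) - 1) := by
          push_cast
          exact Finset.sum_congr rfl fun t _ => by
            rw [Nat.cast_sub (hUpos t)]; norm_num
  -- Step 2: Σ_t (|U_t|-1) ≤ A - S
  have h2 : ∑ t : Fin r, (((unionC C (Hs t)).card : ℤ) - 1) ≤ A - S := by
    have heq : ∀ t : Fin r, ((unionC C (Hs t)).card : ℤ) - 1
        = (∑ i ∈ Hs t, (((C i).card : ℤ) - 1)) - score C (Hs t) :=
      fun t => union_card_eq C (Hs t)
    have hsum : ∑ t : Fin r, (((unionC C (Hs t)).card : ℤ) - 1)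
        = (∑ t : Fin r, ∑ i ∈ Hs t, (((C i).card : ℤ) - 1)) - S := by
      rw [hS, ← Finset.sum_sub_distrib]
      exact Finset.sum_congr rfl fun t _ => heq t
    have hsub : ∑ t : Fin r, ∑ i ∈ Hs t, (((C i).card : ℤ) - 1) ≤ A := by
      rw [hA]
      have hd : ((Finset.univ : Finset (Fin r)) : Set (Fin r)).PairwiseDisjoint Hs := by
        intro s _ t _ hst
        exact hdisj s t hst
      rw [← Finset.sum_biUnion hd]
      refine Finset.sum_le_sum_of_subset_of_nonneg (Finset.subset_univ _) ?_
      intro i _ _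
      have : 1 ≤ (C i).card := Finset.card_pos.2 (hC i)
      have : (1:ℤ) ≤ ((C i).card : ℤ) := by exact_mod_cast this
      linarith
    linarith [hsum, hsub]
  have hDJbound : (DJ.card : ℤ) ≤ A - S := le_trans h1 h2
  -- Step 3: choose centers of Dstar
  choose cc hcc1 hcc2 using hDsat
  set T : Finset V := Finset.univ.image cc with hT
  set Fib : V → Finset (Fin ℓ) := fun c => Finset.univ.filter (fun i => cc i = c) with hFib
  have hmemFib : ∀ i : Fin ℓ, ∀ c, i ∈ Fib c ↔ cc i = c := by
    intro i c; simp [hFib]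
  have hFibHyp : ∀ c ∈ T, IsHyperedge C (Fib c) := by
    intro c hc
    obtain ⟨i, _, rfl⟩ := Finset.mem_image.1 hc
    refine ⟨⟨i, (hmemFib i _).2 rfl⟩, ⟨cc i, ?_⟩⟩
    simp only [interC, Finset.mem_filter, Finset.mem_univ, true_and]
    intro j hj
    rw [hmemFib] at hj
    rw [← hj]; exact hcc1 j
  have hcU : ∀ c ∈ T, c ∈ unionC C (Fib c) := by
    intro c hc
    obtain ⟨i, _, rfl⟩ := Finset.mem_image.1 hc
    exact Finset.mem_biUnion.2 ⟨i, (hmemFib i _).2 rfl, hcc1 i⟩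
  set Sc : V → Finset (V × V) :=
    fun c => ((unionC C (Fib c)).erase c).image (fun x => (c, x)) with hSc
  have hScSub : ∀ c ∈ T, Sc c ⊆ Dstar := by
    intro c hc p hp
    obtain ⟨x, hx, rfl⟩ := Finset.mem_image.1 hp
    have hxc : x ≠ c := Finset.ne_of_mem_erase hx
    obtain ⟨i, hi, hxi⟩ := Finset.mem_biUnion.1 (Finset.mem_of_mem_erase hx)
    have : cc i = c := (hmemFib i c).1 hi
    rw [← this]
    exact hcc2 i x hxi (this ▸ hxc)
  have hScCard : ∀ c ∈ T, (Sc c).card = (unionC C (Fib c)).card - 1 := by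
    intro c hc
    rw [hSc]
    rw [Finset.card_image_of_injective _ (fun a b hab => (Prod.mk.injEq _ _ _ _ ▸ hab : _ ∧ _).2)]
    exact Finset.card_erase_of_mem (hcU c hc)
  have hScDisj : ∀ c ∈ T, ∀ c' ∈ T, c ≠ c' → Disjoint (Sc c) (Sc c') := by
    intro c _ c' _ hcc'
    rw [Finset.disjoint_left]
    rintro p hp hp'
    obtain ⟨x, _, rfl⟩ := Finset.mem_image.1 hp
    obtain ⟨y, _, hy⟩ := Finset.mem_image.1 hp'
    exact hcc' (congrArg Prod.fst hy).symm
  have hUcpos : ∀ c ∈ T, 1 ≤ (unionC C (Fib c)).card :=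
    fun c hc => Finset.card_pos.2 ⟨c, hcU c hc⟩
  have h4 : ∑ c ∈ T, (((unionC C (Fib c)).card : ℤ) - 1) ≤ (Dstar.card : ℤ) := by
    have hnat : ∑ c ∈ T, ((unionC C (Fib c)).card - 1) ≤ Dstar.card := by
      calc ∑ c ∈ T, ((unionC C (Fib c)).card - 1)
          = ∑ c ∈ T, (Sc c).card := by
            exact Finset.sum_congr rfl fun c hc => (hScCard c hc).symm
        _ = (T.biUnion Sc).card := (Finset.card_biUnion hScDisj).symm
        _ ≤ Dstar.card := Finset.card_le_card (fun p hp => by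
            obtain ⟨c, hc, hpc⟩ := Finset.mem_biUnion.1 hp
            exact hScSub c hc hpc)
    calc ∑ c ∈ T, (((unionC C (Fib c)).card : ℤ) - 1)
        = ((∑ c ∈ T, ((unionC C (Fib c)).card - 1) : ℕ) : ℤ) := by
          push_cast
          exact Finset.sum_congr rfl fun c hc => by
            rw [Nat.cast_sub (hUcpos c hc)]; norm_num
      _ ≤ (Dstar.card : ℤ) := by exact_mod_cast hnat
  -- Step 4: Σ_{c∈T}(|U_c|-1) = A - Σ_c score(Fib c)
  have hpartition : T.biUnion Fib = Finset.univ := by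
    apply Finset.eq_univ_of_forall
    intro i
    exact Finset.mem_biUnion.2 ⟨cc i, Finset.mem_image_of_mem cc (Finset.mem_univ i),
      (hmemFib i _).2 rfl⟩
  have hFibDisj : (T : Set V).PairwiseDisjoint Fib := by
    intro c _ c' _ hcc'
    simp only [Function.onFun]
    rw [Finset.disjoint_left]
    intro i hi hi'
    exact hcc' ((hmemFib i c).1 hi ▸ (hmemFib i c').1 hi' ▸ rfl)
  have h5 : ∑ c ∈ T, (((unionC C (Fib c)).card : ℤ) - 1)
      = A - ∑ c ∈ T, score C (Fib c) := by
    have : ∑ c ∈ T, (((unionC C (Fib c)).card : ℤ) - 1)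
        = (∑ c ∈ T, ∑ i ∈ Fib c, (((C i).card : ℤ) - 1)) - ∑ c ∈ T, score C (Fib c) := by
      rw [← Finset.sum_sub_distrib]
      exact Finset.sum_congr rfl fun c _ => union_card_eq C (Fib c)
    rw [this, hA, ← Finset.sum_biUnion hFibDisj, hpartition]
  -- Step 5: Σ_{c∈T} score(Fib c) ≤ k * S
  set Fc : V → Finset (Fin r) :=
    fun c => Finset.univ.filter (fun t => ¬ Disjoint (Fib c) (Hs t)) with hFc
  have hFcNe : ∀ c ∈ T, (Fc c).Nonempty := by
    intro c hc
    obtain ⟨t, ht⟩ := hr (Fib c) (hFibHyp c hc)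
    exact ⟨t, Finset.mem_filter.2 ⟨Finset.mem_univ t, ht⟩⟩
  set τ : V → Fin r := fun c =>
    if h : (Fc c).Nonempty then (Fc c).min' h else ⟨0, hr0⟩ with hτ
  have hτmem : ∀ c ∈ T, ¬ Disjoint (Fib c) (Hs (τ c)) := by
    intro c hc
    have h := hFcNe c hc
    have : τ c ∈ Fc c := by rw [hτ]; simp only [dif_pos h]; exact (Fc c).min'_mem h
    exact (Finset.mem_filter.1 this).2
  have hτmin : ∀ c ∈ T, ∀ s : Fin r, s < τ c → Disjoint (Fib c) (Hs s) := by
    intro c hc s hs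
    by_contra hnd
    have hsF : s ∈ Fc c := Finset.mem_filter.2 ⟨Finset.mem_univ s, hnd⟩
    have h := hFcNe c hc
    have : (Fc c).min' h ≤ s := (Fc c).min'_le s hsF
    rw [hτ] at hs; simp only [dif_pos h] at hs
    exact absurd this (not_le.2 hs)
  have hcharge : ∀ c ∈ T, score C (Fib c) ≤ score C (Hs (τ c)) := by
    intro c hc
    exact hgreedy (τ c) (Fib c) (hFibHyp c hc) (hτmin c hc)
  -- fibers of τ within T have cardinality ≤ k
  have hfibk : ∀ t : Fin r, (T.filter (fun c => τ c = t)).card ≤ k := by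
    intro t
    set ι : V → Fin ℓ := fun c =>
      if h : ((Fib c) ∩ Hs t).Nonempty then h.choose else ⟨0, hℓ⟩ with hι
    have key : ∀ c ∈ T.filter (fun c => τ c = t), ι c ∈ (Fib c) ∩ Hs t := by
      intro c hc
      obtain ⟨hcT, hct⟩ := Finset.mem_filter.1 hc
      have hnd : ¬ Disjoint (Fib c) (Hs t) := hct ▸ hτmem c hcT
      have h : ((Fib c) ∩ Hs t).Nonempty := Finset.not_disjoint_iff_nonempty_inter.1 hnd
      rw [hι]; simp only [dif_pos h]; exact h.choose_spec
    refine le_trans (Finset.card_le_card_of_injOn ι (fun c hc =>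
      (Finset.mem_inter.1 (key c hc)).2) ?_) (hk_ub (Hs t) (hHs t))
    intro c hc c' hc' hcc'
    have h1 := (hmemFib (ι c) c).1 (Finset.mem_inter.1 (key c hc)).1
    have h2 := (hmemFib (ι c') c').1 (Finset.mem_inter.1 (key c' hc')).1
    rw [← h1, ← h2, hcc']
  have h6 : ∑ c ∈ T, score C (Fib c) ≤ (k : ℤ) * S := by
    calc ∑ c ∈ T, score C (Fib c)
        ≤ ∑ c ∈ T, score C (Hs (τ c)) := Finset.sum_le_sum hcharge
      _ = ∑ t : Fin r, ∑ c ∈ T.filter (fun c => τ c = t), score C (Hs (τ c)) :=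
          (Finset.sum_fiberwise T τ (fun c => score C (Hs (τ c)))).symm
      _ = ∑ t : Fin r, ∑ c ∈ T.filter (fun c => τ c = t), score C (Hs t) := by
          refine Finset.sum_congr rfl fun t _ => Finset.sum_congr rfl fun c hc => ?_
          rw [(Finset.mem_filter.1 hc).2]
      _ = ∑ t : Fin r, ((T.filter (fun c => τ c = t)).card : ℤ) * score C (Hs t) := by
          refine Finset.sum_congr rfl fun t _ => ?_
          rw [Finset.sum_const, nsmul_eq_mul]
      _ ≤ ∑ t : Fin r, (k : ℤ) * score C (Hs t) := by
          refine Finset.sum_le_sum fun t _ => ?_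
          exact mul_le_mul_of_nonneg_right (by exact_mod_cast hfibk t)
            (score_nonneg C (hHs t))
      _ = (k : ℤ) * S := by rw [hS, Finset.mul_sum]
  have hDstarBound : A - (k : ℤ) * S ≤ (Dstar.card : ℤ) := by
    have := h4
    rw [h5] at this
    linarith [h6]
  -- final arithmetic
  have hkR : (0 : ℝ) < (k : ℝ) := by exact_mod_cast hk1
  have hAR : (∑ i : Fin ℓ, ((C i).card - 1 : ℝ)) = (A : ℝ) := by
    rw [hA]; push_cast; ring
  rw [hAR]
  have hDJ' : (DJ.card : ℝ) ≤ (A : ℝ) - (S : ℝ) := by exact_mod_cast hDJbound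
  have hDs' : (A : ℝ) - (k : ℝ) * (S : ℝ) ≤ (Dstar.card : ℝ) := by exact_mod_cast hDstarBound
  have hform : (((k : ℝ) - 1) / k) * (A : ℝ) + (1 / (k : ℝ)) * (Dstar.card : ℝ)
      = (((k : ℝ) - 1) * (A : ℝ) + (Dstar.card : ℝ)) / k := by
    field_simp
  rw [hform, le_div_iff₀ hkR]
  nlinarith [mul_le_mul_of_nonneg_right hDJ' hkR.le]
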